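/- Fix ε > 0, b > 0, r_c > 0 and ω ≠ 0, and consider the real 3×3 matrix M with rows (0, ω², 0), (−ω² − ε(r_c² − b²)/(b² + r_c²)², 0, 0), (0, −ε b/(b² + r_c²), 0) arising from the linear stability analysis of the straight vortex pair. Then M has an eigenvalue with strictly positive real part (i.e. the Crow instability occurs) if and only if ω² < ε (b² − r_c²)/(b² + r_c²)². -/
import Mathlib


/-- the stability matrix of the straight vortex pair has an eigenvalue with
strictly positive real part iff `ω² < ε(b² − r_c²)/(b² + r_c²)²` (Crow instability). -/
theorem stmt4 (ε b rc ω : ℝ) (hε : 0 < ε) (hb : 0 < b) (hrc : 0 < rc) (hω : ω ≠ 0)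
    (M : Matrix (Fin 3) (Fin 3) ℝ)
    (hM : M = !![0, ω ^ 2, 0;
                 -ω ^ 2 - ε * (rc ^ 2 - b ^ 2) / (b ^ 2 + rc ^ 2) ^ 2, 0, 0;
                 0, -(ε * b) / (b ^ 2 + rc ^ 2), 0]) :
    (∃ ν : ℂ, 0 < ν.re ∧ (M.map (fun x => (x : ℂ)) - ν • 1).det = 0) ↔
      ω ^ 2 < ε * (b ^ 2 - rc ^ 2) / (b ^ 2 + rc ^ 2) ^ 2 := by
  subst hM
  obtain ⟨a, ha⟩ : ∃ a : ℝ, a = ε * (b ^ 2 - rc ^ 2) / (b ^ 2 + rc ^ 2) ^ 2 - ω ^ 2 :=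
    ⟨_, rfl⟩
  have hω2 : 0 < ω ^ 2 := lt_of_le_of_ne (sq_nonneg ω) (Ne.symm (pow_ne_zero 2 hω))
  have key : ∀ ν : ℂ,
      ((!![0, ω ^ 2, 0;
          -ω ^ 2 - ε * (rc ^ 2 - b ^ 2) / (b ^ 2 + rc ^ 2) ^ 2, 0, 0;
          0, -(ε * b) / (b ^ 2 + rc ^ 2), 0]).map (fun x => (x : ℂ)) - ν • 1).det
        = -ν * (ν ^ 2 - ((a * ω ^ 2 : ℝ) : ℂ)) := by
    intro ν
    simp [Matrix.det_fin_three, Matrix.map_apply, Matrix.one_apply, Matrix.vecHead,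
      Matrix.vecTail, ha]
    ring
  constructor
  · rintro ⟨ν, hre, hdet⟩
    rw [key] at hdet
    rcases mul_eq_zero.mp hdet with h | h
    · exfalso; have : ν = 0 := by simpa using h
      rw [this] at hre; simp at hre
    · have hν2 : ν ^ 2 = ((a * ω ^ 2 : ℝ) : ℂ) := by linear_combination h
      by_contra hcon
      push_neg at hcon
      have hale : a ≤ 0 := by rw [ha]; linarith
      have him : ν.re * ν.im + ν.im * ν.re = 0 := by
        have := congrArg Complex.im hν2
        simpa [pow_two, Complex.mul_im] using this
      have hy : ν.im = 0 := by
        have h1 : ν.re * ν.im = 0 := by linarith [him]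
        rcases mul_eq_zero.mp h1 with h1 | h1
        · linarith
        · exact h1
      have hrepart : ν.re * ν.re = a * ω ^ 2 := by
        have := congrArg Complex.re hν2
        simpa [pow_two, Complex.mul_re, hy] using this
      have h2 : a * ω ^ 2 ≤ 0 := mul_nonpos_of_nonpos_of_nonneg hale (sq_nonneg ω)
      nlinarith [mul_pos hre hre]
  · intro hlt
    have hapos : 0 < a := by rw [ha]; linarith
    have hpos : 0 < a * ω ^ 2 := mul_pos hapos hω2
    refine ⟨(Real.sqrt (a * ω ^ 2) : ℂ), ?_, ?_⟩
    · simpa using Real.sqrt_pos.mpr hpos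
    · rw [key]
      have : ((Real.sqrt (a * ω ^ 2) : ℂ)) ^ 2 = ((a * ω ^ 2 : ℝ) : ℂ) := by
        norm_cast
        rw [Real.sq_sqrt hpos.le]
      rw [this]; ring
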